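/- Let (T, Q) be a tree-decomposition of the intersection graph of an instance of problem GB, and suppose (X̂, λ̂) is a feasible solution of LP-GB. Then there exist an integer k ≥ 1, nonnegative reals μ^1, …, μ^k with Σ_{ℓ=1}^k μ^ℓ = 1, and GB-feasible vectors x^1, …, x^k ∈ {0,1}^n such that for every t ∈ V(T) and every (Y, N) ∈ Ω_t, X̂[Y, N] = Σ_{ℓ=1}^k μ^ℓ · Π_{j∈Y} x^ℓ_j · Π_{j∈N} (1 − x^ℓ_j). Consequently, if the instance of GB is feasible, then for every cost vector c ∈ ℝ^n the minimum of Σ_{j=1}^n c_j x_j over GB-feasible x equals the minimum of Σ_{j=1}^n c_j X[{j}, ∅] over feasible solutions (X, λ) of LP-GB, and the latter minimum is attained. -/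

import Mathlib

open Finset

/-- The real value of a Boolean (0 or 1). -/
def bval (b : Bool) : ℝ := if b then 1 else 0


namespace LPGBaux
variable {n : ℕ}

/-- extend-by-false projection onto a coordinate set. -/
def proj (A : Finset (Fin n)) (x : Fin n → Bool) : Fin n → Bool :=
  fun j => if j ∈ A then x j else false

lemma proj_mem {A : Finset (Fin n)} {x : Fin n → Bool} {j : Fin n} (h : j ∈ A) :
    proj A x j = x j := if_pos h

lemma proj_not_mem {A : Finset (Fin n)} {x : Fin n → Bool} {j : Fin n} (h : j ∉ A) :
    proj A x j = false := if_neg h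

/-- marginal probability of agreeing with `w` on `A`. -/
def marg (q : (Fin n → Bool) → ℝ) (A : Finset (Fin n)) (w : Fin n → Bool) : ℝ :=
  ∑ v ∈ univ.filter (fun v => ∀ j ∈ A, v j = w j), q v

lemma marg_congr {q : (Fin n → Bool) → ℝ} {A : Finset (Fin n)} {w w' : Fin n → Bool}
    (h : ∀ j ∈ A, w j = w' j) : marg q A w = marg q A w' := by
  unfold marg
  congr 1
  apply Finset.filter_congr
  intro v _
  constructor <;> intro hv j hj
  · rw [hv j hj, h j hj]
  · rw [hv j hj, h j hj]

lemma marg_nonneg {q : (Fin n → Bool) → ℝ} (hq : ∀ v, 0 ≤ q v) (A : Finset (Fin n))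
    (w : Fin n → Bool) : 0 ≤ marg q A w :=
  Finset.sum_nonneg fun v _ => hq v

lemma le_marg {q : (Fin n → Bool) → ℝ} (hq : ∀ v, 0 ≤ q v) {A : Finset (Fin n)}
    {w v : Fin n → Bool} (h : ∀ j ∈ A, v j = w j) : q v ≤ marg q A w :=
  Finset.single_le_sum (fun u _ => hq u)
    (by simp only [mem_filter, mem_univ, true_and]; exact h)

lemma marg_empty (q : (Fin n → Bool) → ℝ) (w : Fin n → Bool) :
    marg q ∅ w = ∑ v, q v := by
  unfold marg
  congr 1
  simp

/-- restriction of sums to the support region. -/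
lemma sum_filter_supp {q : (Fin n → Bool) → ℝ} {C : Finset (Fin n)}
    (hq : ∀ v, q v ≠ 0 → ∀ j ∉ C, v j = false) (P : (Fin n → Bool) → Prop)
    [DecidablePred P] :
    ∑ v ∈ univ.filter P, q v
      = ∑ v ∈ univ.filter (fun v => P v ∧ ∀ j ∉ C, v j = false), q v := by
  symm
  apply Finset.sum_subset
  · intro v hv
    simp only [mem_filter, mem_univ, true_and] at hv ⊢
    exact hv.1
  · intro v hv hv'
    by_contra h
    simp only [mem_filter, mem_univ, true_and, not_and] at hv hv'
    exact hv' hv (hq v h)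

lemma marg_supp {q : (Fin n → Bool) → ℝ} {C : Finset (Fin n)}
    (hq : ∀ v, q v ≠ 0 → ∀ j ∉ C, v j = false) (w : Fin n → Bool) :
    marg q C w = q (proj C w) := by
  unfold marg
  rw [sum_filter_supp hq]
  rw [show (univ.filter (fun v => (∀ j ∈ C, v j = w j) ∧ ∀ j ∉ C, v j = false))
      = {proj C w} from ?_]
  · exact Finset.sum_singleton _ _
  ext v
  simp only [mem_filter, mem_univ, true_and, mem_singleton]
  constructor
  · rintro ⟨h1, h2⟩
    funext j
    by_cases hj : j ∈ C
    · rw [h1 j hj, proj_mem hj]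
    · rw [h2 j hj, proj_not_mem hj]
  · rintro rfl
    exact ⟨fun j hj => proj_mem hj, fun j hj => proj_not_mem hj⟩

/-- coarser marginals are sums of finer ones. -/
lemma marg_marg {q : (Fin n → Bool) → ℝ} {A B : Finset (Fin n)} (hAB : A ⊆ B)
    (w : Fin n → Bool) :
    marg q A w = ∑ c ∈ univ.filter
      (fun c => (∀ j ∈ A, c j = w j) ∧ ∀ j ∉ B, c j = false), marg q B c := by
  unfold marg
  rw [← Finset.sum_fiberwise_of_maps_to (g := proj B)
      (t := univ.filter (fun c => (∀ j ∈ A, c j = w j) ∧ ∀ j ∉ B, c j = false)) ?_ q]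
  · apply Finset.sum_congr rfl
    intro c hc
    simp only [mem_filter, mem_univ, true_and] at hc
    congr 1
    ext v
    simp only [mem_filter, mem_univ, true_and]
    constructor
    · rintro ⟨-, rfl⟩
      intro j hj
      rw [← proj_mem (x := v) hj]
    · intro hv
      have hv' : proj B v = c := by
        funext j
        by_cases hj : j ∈ B
        · rw [proj_mem hj, hv j hj]
        · rw [proj_not_mem hj, hc.2 j hj]
      exact ⟨fun j hj => by rw [hv j (hAB hj), hc.1 j hj], hv'⟩
  · intro v hv
    simp only [mem_filter, mem_univ, true_and] at hv ⊢
    exact ⟨fun j hj => by rw [proj_mem (hAB hj)]; exact hv j hj,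
      fun j hj => proj_not_mem hj⟩

lemma marg_eq_of_marg_eq {q q' : (Fin n → Bool) → ℝ} {A B : Finset (Fin n)} (hAB : A ⊆ B)
    (h : ∀ w, marg q B w = marg q' B w) (w : Fin n → Bool) :
    marg q A w = marg q' A w := by
  rw [marg_marg hAB, marg_marg hAB]
  exact Finset.sum_congr rfl fun c _ => h c

/-- products of `bval` as event indicators. -/
lemma sum_prod_eq_marg (q : (Fin n → Bool) → ℝ) {Y N : Finset (Fin n)}
    (hd : Disjoint Y N) :
    ∑ v : Fin n → Bool, q v * (∏ j ∈ Y, bval (v j)) * (∏ j ∈ N, (1 - bval (v j)))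
      = marg q (Y ∪ N) (fun j => decide (j ∈ Y)) := by
  unfold marg
  rw [Finset.sum_filter]
  apply Finset.sum_congr rfl
  intro v _
  by_cases h : ∀ j ∈ Y ∪ N, v j = decide (j ∈ Y)
  · rw [if_pos h]
    have hY : ∀ j ∈ Y, bval (v j) = 1 := by
      intro j hj
      rw [h j (mem_union_left _ hj)]
      simp [bval, hj]
    have hN : ∀ j ∈ N, 1 - bval (v j) = 1 := by
      intro j hj
      have hjY : j ∉ Y := fun hY' => (Finset.disjoint_left.mp hd) hY' hj
      rw [h j (mem_union_right _ hj)]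
      simp [bval, hjY]
    rw [Finset.prod_congr rfl hY, Finset.prod_congr rfl hN]
    simp
  · rw [if_neg h]
    push_neg at h
    obtain ⟨j, hj, hvj⟩ := h
    rcases Finset.mem_union.mp hj with hjY | hjN
    · have : v j = false := by
        simp only [hjY, decide_true] at hvj
        simpa using hvj
      rw [Finset.prod_eq_zero hjY (by simp [bval, this])]
      ring
    · have hjY : j ∉ Y := fun hY' => (Finset.disjoint_left.mp hd) hY' hjN
      have : v j = true := by
        simp only [hjY, decide_false] at hvj
        simpa using hvj
      rw [Finset.prod_eq_zero hjN (by simp [bval, this])]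
      ring

end LPGBaux

namespace LPGBaux2
variable {τ : Type} {T : SimpleGraph τ}

/-- Rerouting walks to avoid a vertex `t₀` whose only neighbor in `S` is `t₁`. -/
lemma avoid (S : Finset τ) (t₀ t₁ : τ)
    (huniq : ∀ u ∈ S, T.Adj t₀ u → u = t₁) :
    ∀ (L : ℕ) (a b : τ) (w : T.Walk a b), w.length ≤ L →
      (∀ u ∈ w.support, u ∈ S) → a ≠ t₀ → b ≠ t₀ →
      ∃ w' : T.Walk a b, ∀ u ∈ w'.support, u ∈ S ∧ u ≠ t₀ := by
  intro L
  induction L with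
  | zero =>
    intro a b w hw hS ha hb
    cases w with
    | nil => exact ⟨.nil, by simp [ha, hS a (by simp)]⟩
    | cons h q => simp at hw
  | succ L IH =>
    intro a b w hw hS ha hb
    cases w with
    | nil => exact ⟨.nil, by simp [ha, hS a (by simp)]⟩
    | @cons _ c _ h q =>
      by_cases hc : c = t₀
      · subst hc
        have hab : a = t₁ := huniq a (hS a (by simp)) h.symm
        have hbc : c ≠ b := fun h' => hb h'.symm
        obtain ⟨u, h2, q2, rfl⟩ := q.exists_eq_cons_of_ne hbc
        have hu : u = t₁ := huniq u (hS u (by simp)) h2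
        have hua : u = a := by rw [hu, hab]
        subst hua
        apply IH u b q2
        · simp only [SimpleGraph.Walk.length_cons] at hw ⊢
          omega
        · intro x hx
          exact hS x (by simp [hx])
        · exact ha
        · exact hb
      · obtain ⟨w', hw'⟩ := IH c b q
          (by simp only [SimpleGraph.Walk.length_cons] at hw; omega)
          (fun x hx => hS x (by simp [hx])) hc hb
        exact ⟨.cons h w', by
          intro u hu
          simp only [SimpleGraph.Walk.support_cons, List.mem_cons] at hu
          rcases hu with rfl | hu
          · exact ⟨hS u (by simp), ha⟩
          · exact hw' u hu⟩

/-- A connected-within subset of a tree with at least two elements has a leaf. -/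
lemma exists_leaf (hT : T.IsTree) (S : Finset τ)
    (hconn : ∀ s ∈ S, ∀ s' ∈ S, ∃ wk : T.Walk s s', ∀ u ∈ wk.support, u ∈ S)
    (hcard : 2 ≤ S.card) :
    ∃ t₀ ∈ S, ∃ t₁ ∈ S, T.Adj t₀ t₁ ∧ (∀ u ∈ S, T.Adj t₀ u → u = t₁) ∧
      (∀ s ∈ S, ∀ s' ∈ S, s ≠ t₀ → s' ≠ t₀ →
        ∃ wk : T.Walk s s', ∀ u ∈ wk.support, u ∈ S ∧ u ≠ t₀) := by
  classical
  have hCon := hT.isConnected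
  obtain ⟨s, hs, s', hs', hss'⟩ := Finset.one_lt_card.mp hcard
  obtain ⟨t₀, ht₀S, ht₀max⟩ := Finset.exists_max_image S (fun t => T.dist s t) ⟨s, hs⟩
  -- t₀ ≠ s
  have hd1 : 1 ≤ T.dist s s' := by
    have := hCon.pos_dist_of_ne hss'
    omega
  have ht₀s : t₀ ≠ s := by
    rintro rfl
    have := ht₀max s' hs'
    simp only [SimpleGraph.dist_self] at this
    omega
  have hst₀ : s ≠ t₀ := ht₀s.symm
  -- the unique path from s to t₀
  obtain ⟨w0, hw0⟩ := hCon.exists_walk_length_eq_dist s t₀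
  set P : T.Walk s t₀ := w0.bypass with hPdef
  have hP : P.IsPath := w0.bypass_isPath
  have hPlen : P.length = T.dist s t₀ :=
    le_antisymm (hw0 ▸ w0.length_bypass_le) (SimpleGraph.dist_le P)
  set t₁ : τ := P.reverse.getVert 1 with ht₁def
  -- uniqueness of paths
  have hup := hT.existsUnique_path
  -- key claim
  have claim : ∀ u ∈ S, T.Adj t₀ u → u = t₁ := by
    intro u huS hadj
    obtain ⟨wu, hwu⟩ := hCon.exists_walk_length_eq_dist s u
    set Pu : T.Walk s u := wu.bypass with hPudef
    have hPu : Pu.IsPath := wu.bypass_isPath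
    have hPulen : Pu.length = T.dist s u :=
      le_antisymm (hwu ▸ wu.length_bypass_le) (SimpleGraph.dist_le Pu)
    by_cases hmem : t₀ ∈ Pu.support
    · exfalso
      have hPt : (Pu.takeUntil t₀ hmem).IsPath := hPu.takeUntil hmem
      have htake : Pu.takeUntil t₀ hmem = P :=
        ((hup s t₀).unique hPt hP)
      have hsplit := congrArg SimpleGraph.Walk.length (Pu.take_spec hmem)
      rw [SimpleGraph.Walk.length_append, htake] at hsplit
      have hdrop1 : 1 ≤ (Pu.dropUntil t₀ hmem).length := by
        rcases Nat.eq_zero_or_pos (Pu.dropUntil t₀ hmem).length with h0 | h0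
        · exact absurd (SimpleGraph.Walk.eq_of_length_eq_zero h0) hadj.ne
        · omega
      have : T.dist s u ≤ T.dist s t₀ := ht₀max u huS
      omega
    · -- extend Pu by the edge u—t₀
      set Pc : T.Walk s t₀ := Pu.concat hadj.symm with hPcdef
      have hPc : Pc.IsPath := by
        rw [← SimpleGraph.Walk.isPath_reverse_iff, hPcdef,
          SimpleGraph.Walk.reverse_concat, SimpleGraph.Walk.cons_isPath_iff]
        exact ⟨Pu.isPath_reverse_iff.mpr hPu, by
          rwa [SimpleGraph.Walk.support_reverse, List.mem_reverse]⟩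
      have hPcP : Pc = P := (hup s t₀).unique hPc hP
      have : Pc.reverse.getVert 1 = u := by
        rw [hPcdef, SimpleGraph.Walk.reverse_concat,
          SimpleGraph.Walk.getVert_cons_succ, SimpleGraph.Walk.getVert_zero]
      rw [ht₁def, ← hPcP, this]
  -- a neighbor of t₀ inside S
  obtain ⟨wk, hwk⟩ := hconn t₀ ht₀S s hs
  obtain ⟨u₁, h1, q1, hq1⟩ := wk.exists_eq_cons_of_ne ht₀s
  have hu₁S : u₁ ∈ S := hwk u₁ (by rw [hq1]; simp)
  have hu₁ : u₁ = t₁ := claim u₁ hu₁S h1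
  have ht₁S : t₁ ∈ S := hu₁ ▸ hu₁S
  have hadj01 : T.Adj t₀ t₁ := hu₁ ▸ h1
  refine ⟨t₀, ht₀S, t₁, ht₁S, hadj01, claim, ?_⟩
  intro a ha b hb ha0 hb0
  obtain ⟨wab, hwab⟩ := hconn a ha b hb
  exact avoid S t₀ t₁ claim wab.length a b wab le_rfl hwab ha0 hb0

/-- Separation: everything in `Q t₀ ∩ Q t` (for `t ∈ S`, `t ≠ t₀`) lies in `Q t₁`. -/
lemma sep {n : ℕ} (hT : T.IsTree) (Q : τ → Finset (Fin n)) (S : Finset τ)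
    (hconn : ∀ s ∈ S, ∀ s' ∈ S, ∃ wk : T.Walk s s', ∀ u ∈ wk.support, u ∈ S)
    (hbag : ∀ (v : Fin n) (s s' : τ), v ∈ Q s → v ∈ Q s' →
      ∃ wk : T.Walk s s', ∀ u ∈ wk.support, v ∈ Q u)
    (t₀ t₁ : τ) (ht₀S : t₀ ∈ S)
    (huniq : ∀ u ∈ S, T.Adj t₀ u → u = t₁) :
    ∀ t ∈ S, t ≠ t₀ → ∀ v, v ∈ Q t₀ → v ∈ Q t → v ∈ Q t₁ := by
  classical
  intro t htS ht v hv0 hvt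
  obtain ⟨w1, hw1⟩ := hbag v t t₀ hvt hv0
  obtain ⟨w2, hw2⟩ := hconn t htS t₀ ht₀S
  have h1 : (w1.toPath : T.Walk t t₀) = w2.toPath :=
    (hT.existsUnique_path t t₀).unique w1.toPath.2 w2.toPath.2
  set P : T.Walk t t₀ := (w1.toPath : T.Walk t t₀) with hPdef
  have hsub1 : ∀ u ∈ P.support, v ∈ Q u := fun u hu =>
    hw1 u (w1.support_toPath_subset hu)
  have hsub2 : ∀ u ∈ P.support, u ∈ S := fun u hu =>
    hw2 u (w2.support_toPath_subset (h1 ▸ hu))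
  have ht0t : t₀ ≠ t := fun h => ht h.symm
  obtain ⟨u, h2, q2, hq2⟩ := P.reverse.exists_eq_cons_of_ne ht0t
  have hu : u ∈ P.support := by
    have : u ∈ P.reverse.support := by rw [hq2]; simp
    rwa [SimpleGraph.Walk.support_reverse, List.mem_reverse] at this
  have : u = t₁ := huniq u (hsub2 u hu) h2
  exact this ▸ hsub1 u hu

end LPGBaux2

namespace LPGBaux3
open LPGBaux LPGBaux2
variable {n : ℕ} {τ : Type}

set_option maxHeartbeats 2000000 in
/-- The gluing lemma: locally consistent distributions on the bags of a tree glue to a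
global distribution with the prescribed marginals. -/
lemma glue [Fintype τ] (T : SimpleGraph τ) (hT : T.IsTree)
    (Q : τ → Finset (Fin n)) (p : τ → (Fin n → Bool) → ℝ)
    (hsupp : ∀ t v, p t v ≠ 0 → ∀ j ∉ Q t, v j = false)
    (hpos : ∀ t v, 0 ≤ p t v)
    (hsum : ∀ t, ∑ v, p t v = 1)
    (hcons : ∀ t t', T.Adj t t' → ∀ w,
      marg (p t) (Q t ∩ Q t') w = marg (p t') (Q t ∩ Q t') w)
    (hbag : ∀ (v : Fin n) (s s' : τ), v ∈ Q s → v ∈ Q s' →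
      ∃ wk : T.Walk s s', ∀ u ∈ wk.support, v ∈ Q u) :
    ∀ (N : ℕ) (S : Finset τ), S.card ≤ N → S.Nonempty →
      (∀ s ∈ S, ∀ s' ∈ S, ∃ wk : T.Walk s s', ∀ u ∈ wk.support, u ∈ S) →
      ∃ μ : (Fin n → Bool) → ℝ, (∀ v, 0 ≤ μ v) ∧ (∑ v, μ v = 1) ∧
        (∀ v, μ v ≠ 0 → ∀ j, (∀ t ∈ S, j ∉ Q t) → v j = false) ∧
        (∀ t ∈ S, ∀ w, marg μ (Q t) w = marg (p t) (Q t) w) := by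
  classical
  intro N
  induction N with
  | zero =>
    intro S hcard hS hconn
    obtain ⟨t, ht⟩ := hS
    have := Finset.card_pos.mpr ⟨t, ht⟩
    omega
  | succ N IH =>
    intro S hcard hS hconn
    by_cases h1 : S.card ≤ 1
    · -- base case : S = {t₀}
      obtain ⟨t₀, rfl⟩ := Finset.card_eq_one.mp (le_antisymm h1 (Finset.card_pos.mpr hS))
      refine ⟨p t₀, hpos t₀, hsum t₀, ?_, ?_⟩
      · intro v hv j hj
        exact hsupp t₀ v hv j (hj t₀ (by simp))
      · intro t ht w
        rw [Finset.mem_singleton.mp ht]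
    · -- inductive step
      push_neg at h1
      obtain ⟨t₀, ht₀S, t₁, ht₁S, hadj01, huniq, hconn'⟩ := exists_leaf hT S hconn h1
      have ht₁0 : t₁ ≠ t₀ := fun h => hadj01.ne (h.symm)
      set S' : Finset τ := S.erase t₀ with hS'def
      have ht₁S' : t₁ ∈ S' := Finset.mem_erase.mpr ⟨ht₁0, ht₁S⟩
      have hS'card : S'.card ≤ N := by
        rw [hS'def, Finset.card_erase_of_mem ht₀S]; omega
      have hS'conn : ∀ s ∈ S', ∀ s' ∈ S',
          ∃ wk : T.Walk s s', ∀ u ∈ wk.support, u ∈ S' := by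
        intro a ha b hb
        obtain ⟨haS, ha0⟩ := (Finset.mem_erase.mp ha).symm.imp id id
        obtain ⟨wk, hwk⟩ := hconn' a (Finset.mem_erase.mp ha).2 b (Finset.mem_erase.mp hb).2
          (Finset.mem_erase.mp ha).1 (Finset.mem_erase.mp hb).1
        exact ⟨wk, fun u hu => Finset.mem_erase.mpr ⟨(hwk u hu).2, (hwk u hu).1⟩⟩
      obtain ⟨μ', hμ'pos, hμ'sum, hμ'supp, hμ'marg⟩ :=
        IH S' hS'card ⟨t₁, ht₁S'⟩ hS'conn
      -- separation
      have hsep : ∀ t ∈ S', ∀ v, v ∈ Q t₀ → v ∈ Q t → v ∈ Q t₁ := by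
        intro t ht v hv0 hvt
        exact sep hT Q S hconn hbag t₀ t₁ ht₀S huniq t (Finset.mem_erase.mp ht).2
          (Finset.mem_erase.mp ht).1 v hv0 hvt
      set A : Finset (Fin n) := Q t₀ ∩ Q t₁ with hAdef
      set B' : Finset (Fin n) := S'.biUnion Q with hB'def
      set B : Finset (Fin n) := B' ∪ Q t₀ with hBdef
      set g : (Fin n → Bool) → ℝ := p t₀ with hgdef
      have hAQ0 : A ⊆ Q t₀ := Finset.inter_subset_left
      have hAQ1 : A ⊆ Q t₁ := Finset.inter_subset_right
      have hQ1B' : Q t₁ ⊆ B' := Finset.subset_biUnion_of_mem Q ht₁S'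
      have hAB' : A ⊆ B' := hAQ1.trans hQ1B'
      have hB'Q0 : B' ∩ Q t₀ = A := by
        apply Finset.Subset.antisymm
        · intro j hj
          obtain ⟨hjB', hj0⟩ := Finset.mem_inter.mp hj
          obtain ⟨t, htS', hjt⟩ := Finset.mem_biUnion.mp hjB'
          exact Finset.mem_inter.mpr ⟨hj0, hsep t htS' j hj0 hjt⟩
        · intro j hj
          exact Finset.mem_inter.mpr ⟨hAB' hj, hAQ0 hj⟩
      have hμ'suppB : ∀ v, μ' v ≠ 0 → ∀ j ∉ B', v j = false := by
        intro v hv j hj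
        refine hμ'supp v hv j fun t ht => fun hjt => hj ?_
        exact Finset.mem_biUnion.mpr ⟨t, ht, hjt⟩
      have hgsupp : ∀ v, g v ≠ 0 → ∀ j ∉ Q t₀, v j = false := hsupp t₀
      -- edge consistency transferred to μ'
      have econs : ∀ w, marg g A w = marg μ' A w := by
        intro w
        rw [hgdef, hAdef, hcons t₀ t₁ hadj01 w]
        exact (marg_eq_of_marg_eq hAQ1 (fun w' => hμ'marg t₁ ht₁S' w') w).symm
      -- the glued distribution
      set glue2 : (Fin n → Bool) → (Fin n → Bool) → (Fin n → Bool) :=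
        fun y z j => if j ∈ B' then y j else z j with hglue2
      set μ : (Fin n → Bool) → ℝ := fun x =>
        if (∀ j ∉ B, x j = false) ∧ marg g A x ≠ 0 then
          μ' (proj B' x) * g (proj (Q t₀) x) / marg g A x
        else 0 with hμdef
      -- basic facts about glue2/proj
      have hproj_glue_B' : ∀ y z, (∀ j ∉ B', y j = false) → proj B' (glue2 y z) = y := by
        intro y z hy
        funext j
        by_cases hj : j ∈ B'
        · rw [proj_mem hj]; simp [hglue2, hj]
        · rw [proj_not_mem hj, hy j hj]
      have hproj_glue_Q0 : ∀ y z, (∀ j ∉ Q t₀, z j = false) → (∀ j ∈ A, z j = y j) →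
          proj (Q t₀) (glue2 y z) = z := by
        intro y z hz hzy
        funext j
        by_cases hj : j ∈ Q t₀
        · rw [proj_mem hj]
          simp only [hglue2]
          by_cases hjB : j ∈ B'
          · rw [if_pos hjB, ← hzy j (hB'Q0 ▸ Finset.mem_inter.mpr ⟨hjB, hj⟩)]
          · rw [if_neg hjB]
        · rw [proj_not_mem hj, hz j hj]
      have hglue_vanish : ∀ y z, (∀ j ∉ B', y j = false) → (∀ j ∉ Q t₀, z j = false) →
          ∀ j ∉ B, glue2 y z j = false := by
        intro y z hy hz j hj
        simp only [hglue2]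
        rw [hBdef, Finset.mem_union] at hj
        push_neg at hj
        rw [if_neg hj.1, hz j hj.2]
      have hglue_agree_A : ∀ y z, ∀ j ∈ A, glue2 y z j = y j := by
        intro y z j hj
        simp only [hglue2, if_pos (hAB' hj)]
      have hglue_recover : ∀ x, (∀ j ∉ B, x j = false) → glue2 (proj B' x) (proj (Q t₀) x) = x := by
        intro x hx
        funext j
        simp only [hglue2]
        by_cases hj : j ∈ B'
        · rw [if_pos hj, proj_mem hj]
        · rw [if_neg hj]
          by_cases hj0 : j ∈ Q t₀
          · rw [proj_mem hj0]
          · rw [proj_not_mem hj0, hx j (by rw [hBdef, Finset.mem_union]; tauto)]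
      -- μ' vanishes where the A-marginal of g vanishes
      have hμ'zero : ∀ y, marg g A y = 0 → μ' y = 0 := by
        intro y hy
        have h1 : μ' y ≤ marg μ' A y :=
          le_marg hμ'pos (fun j _ => rfl)
        rw [← econs, hy] at h1
        exact le_antisymm h1 (hμ'pos y)
      -- the key computation : marginals over subsets of B'
      have key : ∀ (E : Finset (Fin n)), E ⊆ B' → ∀ w, marg μ E w = marg μ' E w := by
        intro E hE w
        have hμsupp : ∀ x, μ x ≠ 0 → ∀ j ∉ B, x j = false := by
          intro x hx
          by_contra hc
          push_neg at hc
          apply hx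
          rw [hμdef]
          simp only
          rw [if_neg]
          rintro ⟨h1, -⟩
          obtain ⟨j, hj1, hj2⟩ := hc
          exact hj2 (h1 j hj1)
        rw [marg, sum_filter_supp hμsupp]
        rw [← Finset.sum_fiberwise_of_maps_to (g := proj B')
          (t := univ.filter (fun y => (∀ j ∈ E, y j = w j) ∧ ∀ j ∉ B', y j = false)) ?_ μ]
        swap
        · intro x hx
          simp only [mem_filter, mem_univ, true_and] at hx ⊢
          refine ⟨fun j hj => ?_, fun j hj => proj_not_mem hj⟩
          rw [proj_mem (hE hj)]
          exact hx.1 j hj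
        rw [show marg μ' E w = ∑ y ∈ univ.filter
            (fun y => (∀ j ∈ E, y j = w j) ∧ ∀ j ∉ B', y j = false), μ' y from by
          rw [marg, sum_filter_supp hμ'suppB]]
        apply Finset.sum_congr rfl
        intro y hy
        simp only [mem_filter, mem_univ, true_and] at hy
        obtain ⟨hyw, hyB'⟩ := hy
        -- reindex the fiber by z = proj (Q t₀) x
        rw [show (Finset.filter (fun x => proj B' x = y)
            (univ.filter fun x => (∀ j ∈ E, x j = w j) ∧ ∀ j ∉ B, x j = false))
            = univ.filter (fun x => (∀ j ∉ B, x j = false) ∧ proj B' x = y) from ?_]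
        swap
        · ext x
          simp only [Finset.mem_filter, mem_univ, true_and]
          constructor
          · rintro ⟨⟨-, h2⟩, h3⟩
            exact ⟨h2, h3⟩
          · rintro ⟨h2, h3⟩
            refine ⟨⟨fun j hj => ?_, h2⟩, h3⟩
            have := hyw j hj
            rw [← h3, proj_mem (hE hj)] at this
            exact this
        rw [Finset.sum_nbij' (i := proj (Q t₀)) (j := glue2 y)
          (t := univ.filter (fun z => (∀ j ∉ Q t₀, z j = false) ∧ ∀ j ∈ A, z j = y j))
          (g := fun z => μ (glue2 y z)) ?_ ?_ ?_ ?_ ?_]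
        · -- compute the inner sum over z
          by_cases hm : marg g A y = 0
          · rw [hμ'zero y hm]
            apply Finset.sum_eq_zero
            intro z hz
            simp only [mem_filter, mem_univ, true_and] at hz
            rw [hμdef]
            simp only
            rw [if_neg]
            rintro ⟨-, hne⟩
            exact hne (by rw [marg_congr (hglue_agree_A y z)]; exact hm)
          · have : ∀ z ∈ univ.filter (fun z => (∀ j ∉ Q t₀, z j = false) ∧ ∀ j ∈ A, z j = y j),
                μ (glue2 y z) = μ' y * (g z / marg g A y) := by
              intro z hz
              simp only [mem_filter, mem_univ, true_and] at hz
              rw [hμdef]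
              simp only
              rw [if_pos, hproj_glue_B' y z hyB', hproj_glue_Q0 y z hz.1 hz.2,
                marg_congr (hglue_agree_A y z)]
              · ring
              · exact ⟨hglue_vanish y z hyB' hz.1,
                  by rw [marg_congr (hglue_agree_A y z)]; exact hm⟩
            rw [Finset.sum_congr rfl this, ← Finset.mul_sum, ← Finset.sum_div]
            rw [show ∑ z ∈ univ.filter
                (fun z => (∀ j ∉ Q t₀, z j = false) ∧ ∀ j ∈ A, z j = y j), g z
                = marg g A y from ?_]
            · field_simp
            · rw [marg, sum_filter_supp hgsupp (P := fun z => ∀ j ∈ A, z j = y j)]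
              congr 1
              ext z
              simp only [mem_filter, mem_univ, true_and]
              exact and_comm
        · intro x hx
          simp only [mem_filter, mem_univ, true_and] at hx ⊢
          refine ⟨fun j hj => proj_not_mem hj, fun j hj => ?_⟩
          rw [proj_mem (hAQ0 hj), ← hx.2, proj_mem (hAB' hj)]
        · intro z hz
          simp only [mem_filter, mem_univ, true_and] at hz ⊢
          exact ⟨hglue_vanish y z hyB' hz.1, hproj_glue_B' y z hyB'⟩
        · intro x hx
          simp only [mem_filter, mem_univ, true_and] at hx
          conv_rhs => rw [← hglue_recover x hx.1]
          rw [hx.2]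
        · intro z hz
          simp only [mem_filter, mem_univ, true_and] at hz
          exact hproj_glue_Q0 y z hz.1 hz.2
        · intro x hx
          simp only [mem_filter, mem_univ, true_and] at hx
          have hxx : glue2 y (proj (Q t₀) x) = x := by
            conv_lhs => rw [← hx.2]
            exact hglue_recover x hx.1
          show μ x = μ (glue2 y (proj (Q t₀) x))
          rw [hxx]
      -- marginal at t₀
      have keyt0 : ∀ w, marg μ (Q t₀) w = marg g (Q t₀) w := by
        intro w
        have hμsupp : ∀ x, μ x ≠ 0 → ∀ j ∉ B, x j = false := by
          intro x hx
          by_contra hc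
          push_neg at hc
          apply hx
          rw [hμdef]
          simp only
          rw [if_neg]
          rintro ⟨h1, -⟩
          obtain ⟨j, hj1, hj2⟩ := hc
          exact hj2 (h1 j hj1)
        set z₀ : Fin n → Bool := proj (Q t₀) w with hz₀def
        have hz₀A : ∀ j ∈ A, z₀ j = w j := fun j hj => proj_mem (hAQ0 hj)
        rw [marg, sum_filter_supp hμsupp]
        rw [← Finset.sum_fiberwise_of_maps_to (g := proj B')
          (t := univ.filter (fun y => (∀ j ∈ A, y j = w j) ∧ ∀ j ∉ B', y j = false)) ?_ μ]
        swap
        · intro x hx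
          simp only [mem_filter, mem_univ, true_and] at hx ⊢
          refine ⟨fun j hj => ?_, fun j hj => proj_not_mem hj⟩
          rw [proj_mem (hAB' hj)]
          exact hx.1 j (hAQ0 hj)
        have inner : ∀ y ∈ univ.filter
            (fun y => (∀ j ∈ A, y j = w j) ∧ ∀ j ∉ B', y j = false),
            ∑ x ∈ Finset.filter (fun x => proj B' x = y)
              (univ.filter fun x => (∀ j ∈ Q t₀, x j = w j) ∧ ∀ j ∉ B, x j = false), μ x
            = μ (glue2 y z₀) := by
          intro y hy
          simp only [mem_filter, mem_univ, true_and] at hy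
          obtain ⟨hyw, hyB'⟩ := hy
          rw [show (Finset.filter (fun x => proj B' x = y)
              (univ.filter fun x => (∀ j ∈ Q t₀, x j = w j) ∧ ∀ j ∉ B, x j = false))
              = {glue2 y z₀} from ?_]
          · exact Finset.sum_singleton _ _
          ext x
          simp only [Finset.mem_filter, mem_univ, true_and, Finset.mem_singleton]
          constructor
          · rintro ⟨⟨h1, h2⟩, h3⟩
            have : proj (Q t₀) x = z₀ := by
              funext j
              by_cases hj : j ∈ Q t₀
              · rw [proj_mem hj, hz₀def, proj_mem hj, h1 j hj]
              · rw [proj_not_mem hj, hz₀def, proj_not_mem hj]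
            rw [← hglue_recover x h2, h3, this]
          · rintro rfl
            refine ⟨⟨fun j hj => ?_, hglue_vanish y z₀ hyB' (fun j hj => proj_not_mem hj)⟩,
              hproj_glue_B' y z₀ hyB'⟩
            simp only [hglue2]
            by_cases hjB : j ∈ B'
            · rw [if_pos hjB]
              exact hyw j (hB'Q0 ▸ Finset.mem_inter.mpr ⟨hjB, hj⟩)
            · rw [if_neg hjB, hz₀def, proj_mem hj]
        rw [Finset.sum_congr rfl inner]
        have hmargz : ∀ y ∈ univ.filter
            (fun y => (∀ j ∈ A, y j = w j) ∧ ∀ j ∉ B', y j = false),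
            μ (glue2 y z₀) = if marg g A w = 0 then 0 else μ' y * (g z₀ / marg g A w) := by
          intro y hy
          simp only [mem_filter, mem_univ, true_and] at hy
          obtain ⟨hyw, hyB'⟩ := hy
          have hAy : marg g A (glue2 y z₀) = marg g A w := by
            rw [marg_congr (hglue_agree_A y z₀)]
            exact marg_congr hyw
          by_cases hm : marg g A w = 0
          · rw [if_pos hm, hμdef]
            simp only
            rw [if_neg]
            rintro ⟨-, hne⟩
            exact hne (hAy.trans hm)
          · rw [if_neg hm, hμdef]
            simp only
            rw [if_pos, hproj_glue_B' y z₀ hyB',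
              hproj_glue_Q0 y z₀ (fun j hj => proj_not_mem hj)
                (fun j hj => by rw [hz₀def, proj_mem (hAQ0 hj), ← hyw j hj]), hAy]
            · ring
            · exact ⟨hglue_vanish y z₀ hyB' (fun j hj => proj_not_mem hj),
                by rw [hAy]; exact hm⟩
        rw [Finset.sum_congr rfl hmargz]
        rw [marg_supp hgsupp]
        by_cases hm : marg g A w = 0
        · simp only [if_pos hm, Finset.sum_const, smul_zero]
          have : g (proj (Q t₀) w) ≤ marg g A w :=
            le_marg (hpos t₀) (fun j hj => proj_mem (hAQ0 hj))
          have h0 : 0 ≤ g (proj (Q t₀) w) := hpos t₀ _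
          rw [hm] at this
          linarith
        · simp only [if_neg hm]
          rw [← Finset.sum_mul]
          rw [show ∑ y ∈ univ.filter
              (fun y => (∀ j ∈ A, y j = w j) ∧ ∀ j ∉ B', y j = false), μ' y
              = marg g A w from ?_]
          · rw [hz₀def]; field_simp
          · rw [econs, marg]
            exact (sum_filter_supp hμ'suppB _).symm
      -- assemble
      refine ⟨μ, ?_, ?_, ?_, ?_⟩
      · intro v
        rw [hμdef]
        simp only
        split
        · rename_i h
          have := marg_nonneg (hpos t₀) A v
          have h1 : (0:ℝ) ≤ μ' (proj B' v) := hμ'pos _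
          have h2 : (0:ℝ) ≤ g (proj (Q t₀) v) := hpos t₀ _
          positivity
        · exact le_refl 0
      · have := key ∅ (Finset.empty_subset _) (fun _ => false)
        rw [marg_empty, marg_empty] at this
        rw [this, hμ'sum]
      · intro v hv j hj
        have hμsupp : ∀ x, μ x ≠ 0 → ∀ j ∉ B, x j = false := by
          intro x hx
          by_contra hc
          push_neg at hc
          apply hx
          rw [hμdef]
          simp only
          rw [if_neg]
          rintro ⟨h1, -⟩
          obtain ⟨j', hj1, hj2⟩ := hc
          exact hj2 (h1 j' hj1)
        apply hμsupp v hv j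
        rw [hBdef, Finset.mem_union]
        push_neg
        constructor
        · intro hjB'
          obtain ⟨t, htS', hjt⟩ := Finset.mem_biUnion.mp hjB'
          exact hj t (Finset.mem_erase.mp htS').2 hjt
        · exact hj t₀ ht₀S
      · intro t htS w
        by_cases ht : t = t₀
        · subst ht
          exact keyt0 w
        · have htS' : t ∈ S' := Finset.mem_erase.mpr ⟨ht, htS⟩
          rw [key (Q t) (Finset.subset_biUnion_of_mem Q htS') w, hμ'marg t htS' w]

/-- Every set of vertices pairwise covered by bags lies in a single bag (Helly for subtrees). -/
lemma clique_in_bag (T : SimpleGraph τ) (hT : T.IsTree)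
    (Q : τ → Finset (Fin n))
    (hbag : ∀ (v : Fin n) (s s' : τ), v ∈ Q s → v ∈ Q s' →
      ∃ wk : T.Walk s s', ∀ u ∈ wk.support, v ∈ Q u)
    (W : Finset (Fin n)) :
    ∀ (N : ℕ) (S : Finset τ), S.card ≤ N → S.Nonempty →
      (∀ s ∈ S, ∀ s' ∈ S, ∃ wk : T.Walk s s', ∀ u ∈ wk.support, u ∈ S) →
      (∀ u ∈ W, ∀ v ∈ W, ∃ t ∈ S, u ∈ Q t ∧ v ∈ Q t) →
      ∃ t ∈ S, W ⊆ Q t := by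
  classical
  intro N
  induction N with
  | zero =>
    intro S hcard hS hconn hW
    obtain ⟨t, ht⟩ := hS
    have := Finset.card_pos.mpr ⟨t, ht⟩
    omega
  | succ N IH =>
    intro S hcard hS hconn hW
    by_cases h1 : S.card ≤ 1
    · obtain ⟨t₀, rfl⟩ := Finset.card_eq_one.mp (le_antisymm h1 (Finset.card_pos.mpr hS))
      refine ⟨t₀, by simp, fun u hu => ?_⟩
      obtain ⟨t, ht, hu', -⟩ := hW u hu u hu
      rwa [Finset.mem_singleton.mp ht] at hu'
    · push_neg at h1
      obtain ⟨t₀, ht₀S, t₁, ht₁S, hadj01, huniq, hconn'⟩ := exists_leaf hT S hconn h1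
      have ht₁0 : t₁ ≠ t₀ := fun h => hadj01.ne (h.symm)
      set S' : Finset τ := S.erase t₀ with hS'def
      have ht₁S' : t₁ ∈ S' := Finset.mem_erase.mpr ⟨ht₁0, ht₁S⟩
      have hS'card : S'.card ≤ N := by
        rw [hS'def, Finset.card_erase_of_mem ht₀S]; omega
      have hS'conn : ∀ s ∈ S', ∀ s' ∈ S',
          ∃ wk : T.Walk s s', ∀ u ∈ wk.support, u ∈ S' := by
        intro a ha b hb
        obtain ⟨wk, hwk⟩ := hconn' a (Finset.mem_erase.mp ha).2 b (Finset.mem_erase.mp hb).2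
          (Finset.mem_erase.mp ha).1 (Finset.mem_erase.mp hb).1
        exact ⟨wk, fun u hu => Finset.mem_erase.mpr ⟨(hwk u hu).2, (hwk u hu).1⟩⟩
      have hsep : ∀ t ∈ S', ∀ v, v ∈ Q t₀ → v ∈ Q t → v ∈ Q t₁ := by
        intro t ht v hv0 hvt
        exact sep hT Q S hconn hbag t₀ t₁ ht₀S huniq t (Finset.mem_erase.mp ht).2
          (Finset.mem_erase.mp ht).1 v hv0 hvt
      by_cases hWQ0 : W ⊆ Q t₀
      · exact ⟨t₀, ht₀S, hWQ0⟩
      · obtain ⟨w₀, hw₀W, hw₀Q0⟩ := Finset.not_subset.mp hWQ0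
        have hW' : ∀ u ∈ W, ∀ v ∈ W, ∃ t ∈ S', u ∈ Q t ∧ v ∈ Q t := by
          intro u hu v hv
          obtain ⟨t, htS, hut, hvt⟩ := hW u hu v hv
          by_cases ht : t = t₀
          · rw [ht] at hut hvt
            obtain ⟨t', ht'S, hut', hw₀t'⟩ := hW u hu w₀ hw₀W
            have ht'0 : t' ≠ t₀ := fun h => hw₀Q0 (h ▸ hw₀t')
            have ht'S' : t' ∈ S' := Finset.mem_erase.mpr ⟨ht'0, ht'S⟩
            obtain ⟨t'', ht''S, hvt'', hw₀t''⟩ := hW v hv w₀ hw₀W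
            have ht''0 : t'' ≠ t₀ := fun h => hw₀Q0 (h ▸ hw₀t'')
            have ht''S' : t'' ∈ S' := Finset.mem_erase.mpr ⟨ht''0, ht''S⟩
            exact ⟨t₁, ht₁S', hsep t' ht'S' u hut hut', hsep t'' ht''S' v hvt hvt''⟩
          · exact ⟨t, Finset.mem_erase.mpr ⟨ht, htS⟩, hut, hvt⟩
        obtain ⟨t, htS', hWt⟩ := IH S' hS'card ⟨t₁, ht₁S'⟩ hS'conn hW'
        exact ⟨t, (Finset.mem_erase.mp htS').2, hWt⟩

end LPGBaux3

/-- Restriction of a 0/1 vector on `Fin n` to the coordinates in `A`. -/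
def restr {n : ℕ} (x : Fin n → Bool) (A : Finset (Fin n)) : {j // j ∈ A} → Bool :=
  fun j => x j.val

/-- GB-feasibility: the restriction of `x` to each constraint support `K i` lies in `Sc i`. -/
def GBFeas {n m : ℕ} (K : Fin m → Finset (Fin n))
    (Sc : ∀ i : Fin m, Set ({j // j ∈ K i} → Bool)) (x : Fin n → Bool) : Prop :=
  ∀ i, restr x (K i) ∈ Sc i

/-- The intersection graph of a GB instance. -/
def interGraph {n m : ℕ} (K : Fin m → Finset (Fin n)) : SimpleGraph (Fin n) where
  Adj j k := j ≠ k ∧ ∃ i, j ∈ K i ∧ k ∈ K i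
  symm := by
    constructor
    rintro j k ⟨hne, i, hj, hk⟩
    exact ⟨hne.symm, i, hk, hj⟩
  loopless := by
    constructor
    rintro j ⟨hne, -⟩
    exact hne rfl

/-- Tree-decomposition of a graph `H`: `T` is a finite tree, every vertex of `H` appears in a
set of bags inducing a (nonempty) connected subgraph of `T`, and each edge of `H` is contained
in some bag. -/
def IsTreeDecomp {V τ : Type} (H : SimpleGraph V) (T : SimpleGraph τ) (Q : τ → Finset V) : Prop :=
  T.IsTree ∧ (∀ v : V, (T.induce {t | v ∈ Q t}).Connected) ∧
    (∀ u v : V, H.Adj u v → ∃ t, u ∈ Q t ∧ v ∈ Q t)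

/-- `F t`: 0/1 vectors on `Q t` (canonically extended by `false` off `Q t`), satisfying every
constraint whose support is contained in `Q t`. -/
def Ffeas {n m : ℕ} {τ : Type} (K : Fin m → Finset (Fin n))
    (Sc : ∀ i : Fin m, Set ({j // j ∈ K i} → Bool)) (Q : τ → Finset (Fin n)) (t : τ) :
    Set (Fin n → Bool) :=
  {v | (∀ j, j ∉ Q t → v j = false) ∧ ∀ i, K i ⊆ Q t → restr v (K i) ∈ Sc i}

/-- `Ω t`: pairs `(Y, N)` of disjoint subsets of `Q t` such that either `|Y| ≤ 1` and `N = ∅`,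
or `(Y, N)` is a partition of `Q t ∩ Q t'` for some neighbor `t'` of `t` in `T`. -/
def Omega {n : ℕ} {τ : Type} (T : SimpleGraph τ) (Q : τ → Finset (Fin n)) (t : τ) :
    Set (Finset (Fin n) × Finset (Fin n)) :=
  {YN | Disjoint YN.1 YN.2 ∧ YN.1 ∪ YN.2 ⊆ Q t ∧
    ((YN.1.card ≤ 1 ∧ YN.2 = ∅) ∨ ∃ t', T.Adj t t' ∧ YN.1 ∪ YN.2 = Q t ∩ Q t')}

/-- Feasibility for the linear system LP-GB (λ-variables are extended by `0` off `F t`). -/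
def LPGBFeas {n m : ℕ} {τ : Type} (K : Fin m → Finset (Fin n))
    (Sc : ∀ i : Fin m, Set ({j // j ∈ K i} → Bool))
    (T : SimpleGraph τ) (Q : τ → Finset (Fin n))
    (X : Finset (Fin n) × Finset (Fin n) → ℝ) (lam : τ → (Fin n → Bool) → ℝ) : Prop :=
  (∀ t v, v ∉ Ffeas K Sc Q t → lam t v = 0) ∧
  (∀ t v, 0 ≤ lam t v) ∧
  (∀ t, ∑ v : Fin n → Bool, lam t v = 1) ∧
  (∀ t, ∀ YN ∈ Omega T Q t,
    X YN = ∑ v : Fin n → Bool,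
      lam t v * (∏ j ∈ YN.1, bval (v j)) * (∏ j ∈ YN.2, (1 - bval (v j))))

/-- Feasibility for the linear system LPz (λ-variables are extended by `0` off `F t`). -/
def LPzFeas {n m : ℕ} {τ : Type} (K : Fin m → Finset (Fin n))
    (Sc : ∀ i : Fin m, Set ({j // j ∈ K i} → Bool))
    (T : SimpleGraph τ) (Q : τ → Finset (Fin n))
    (Z : Finset (Fin n) → ℝ) (lam : τ → (Fin n → Bool) → ℝ) : Prop :=
  (∀ t v, v ∉ Ffeas K Sc Q t → lam t v = 0) ∧
  (∀ t v, 0 ≤ lam t v) ∧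
  (∀ t, ∑ v : Fin n → Bool, lam t v = 1) ∧
  (∀ t, ∀ S : Finset (Fin n), S ⊆ Q t →
    Z S = ∑ v ∈ Finset.univ.filter (fun v : Fin n → Bool => ∀ j ∈ S, v j = true), lam t v)


namespace LPGBmain
open LPGBaux LPGBaux2 LPGBaux3

theorem decomp {n m : ℕ} {τ : Type} [Fintype τ] (K : Fin m → Finset (Fin n))
    (Sc : ∀ i : Fin m, Set ({j // j ∈ K i} → Bool))
    (T : SimpleGraph τ) (Q : τ → Finset (Fin n))
    (hTD : IsTreeDecomp (interGraph K) T Q)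
    (X : Finset (Fin n) × Finset (Fin n) → ℝ) (lam : τ → (Fin n → Bool) → ℝ)
    (hfeas : LPGBFeas K Sc T Q X lam) :
    ∃ (k : ℕ) (μ : Fin k → ℝ) (x : Fin k → Fin n → Bool),
      1 ≤ k ∧ (∀ ℓ, 0 ≤ μ ℓ) ∧ (∑ ℓ, μ ℓ) = 1 ∧ (∀ ℓ, GBFeas K Sc (x ℓ)) ∧
      (∀ t, ∀ YN ∈ Omega T Q t,
        X YN = ∑ ℓ, μ ℓ * (∏ j ∈ YN.1, bval (x ℓ j)) * (∏ j ∈ YN.2, (1 - bval (x ℓ j)))) := by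
  classical
  obtain ⟨hT, hbagconn, hedge⟩ := hTD
  obtain ⟨hsupp0, hpos, hsum, hX⟩ := hfeas
  have hbag : ∀ (v : Fin n) (s s' : τ), v ∈ Q s → v ∈ Q s' →
      ∃ wk : T.Walk s s', ∀ u ∈ wk.support, v ∈ Q u := by
    intro v s s' hs hs'
    obtain ⟨w⟩ := (hbagconn v).preconnected ⟨s, hs⟩ ⟨s', hs'⟩
    refine ⟨w.map (SimpleGraph.Embedding.induce {t | v ∈ Q t}).toHom, ?_⟩
    intro u hu
    have hu' : u ∈ (w.map (SimpleGraph.Embedding.induce {t | v ∈ Q t}).toHom).support := hu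
    rw [SimpleGraph.Walk.support_map, List.mem_map] at hu'
    obtain ⟨a, ha, rfl⟩ := hu'
    exact a.2
  have hsupp : ∀ t v, lam t v ≠ 0 → ∀ j ∉ Q t, v j = false := by
    intro t v hv j hj
    have hvF : v ∈ Ffeas K Sc Q t := by
      by_contra hc; exact hv (hsupp0 t v hc)
    exact hvF.1 j hj
  -- edge consistency
  have hcons : ∀ t t', T.Adj t t' → ∀ w,
      marg (lam t) (Q t ∩ Q t') w = marg (lam t') (Q t ∩ Q t') w := by
    intro t t' hadj w
    set A := Q t ∩ Q t' with hA
    set Y := A.filter (fun j => w j = true) with hY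
    set Nn := A.filter (fun j => ¬ w j = true) with hN
    have hdisj : Disjoint Y Nn := Finset.disjoint_filter_filter_not A A _
    have hun : Y ∪ Nn = A := Finset.filter_union_filter_not_eq _ A
    have hOm1 : ((Y, Nn) : Finset (Fin n) × Finset (Fin n)) ∈ Omega T Q t :=
      ⟨hdisj, by rw [hun, hA]; exact Finset.inter_subset_left,
        Or.inr ⟨t', hadj, by rw [hun]⟩⟩
    have hOm2 : ((Y, Nn) : Finset (Fin n) × Finset (Fin n)) ∈ Omega T Q t' :=
      ⟨hdisj, by rw [hun, hA]; exact Finset.inter_subset_right,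
        Or.inr ⟨t, hadj.symm, by rw [hun, hA, Finset.inter_comm]⟩⟩
    have e1 := hX t (Y, Nn) hOm1
    have e2 := hX t' (Y, Nn) hOm2
    rw [sum_prod_eq_marg (lam t) hdisj] at e1
    rw [sum_prod_eq_marg (lam t') hdisj] at e2
    have hwY : ∀ j ∈ Y ∪ Nn, w j = decide (j ∈ Y) := by
      intro j hj
      rw [hun] at hj
      by_cases hwj : w j = true
      · have : j ∈ Y := by rw [hY]; exact Finset.mem_filter.mpr ⟨hj, hwj⟩
        simp [this, hwj]
      · have : j ∉ Y := by
          rw [hY]; intro hc; exact hwj (Finset.mem_filter.mp hc).2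
        simp only [Bool.not_eq_true] at hwj
        simp [this, hwj]
    calc marg (lam t) A w = marg (lam t) (Y ∪ Nn) w := by rw [hun]
      _ = marg (lam t) (Y ∪ Nn) (fun j => decide (j ∈ Y)) := marg_congr hwY
      _ = marg (lam t') (Y ∪ Nn) (fun j => decide (j ∈ Y)) := by rw [← e1, ← e2]
      _ = marg (lam t') (Y ∪ Nn) w := (marg_congr hwY).symm
      _ = marg (lam t') A w := by rw [hun]
  have hτne : Nonempty τ := hT.isConnected.nonempty
  have huniv : (Finset.univ : Finset τ).Nonempty := Finset.univ_nonempty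
  have hconnU : ∀ s ∈ (Finset.univ : Finset τ), ∀ s' ∈ (Finset.univ : Finset τ),
      ∃ wk : T.Walk s s', ∀ u ∈ wk.support, u ∈ (Finset.univ : Finset τ) := by
    intro s _ s' _
    obtain ⟨w⟩ := hT.isConnected.preconnected s s'
    exact ⟨w, fun u _ => Finset.mem_univ u⟩
  obtain ⟨μ0, hμ0pos, hμ0sum, hμ0supp, hμ0marg⟩ :=
    glue T hT Q lam hsupp hpos hsum hcons hbag (Finset.univ : Finset τ).card
      Finset.univ le_rfl huniv hconnU
  -- support points are GB-feasible
  have hfeasx : ∀ x, μ0 x ≠ 0 → GBFeas K Sc x := by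
    intro x hx i
    have hWpair : ∀ u ∈ K i, ∀ v ∈ K i, ∃ t ∈ (Finset.univ : Finset τ),
        u ∈ Q t ∧ v ∈ Q t := by
      intro u hu v hv
      by_cases huv : u = v
      · subst huv
        obtain ⟨⟨t, ht⟩⟩ := (hbagconn u).nonempty
        exact ⟨t, Finset.mem_univ t, ht, ht⟩
      · obtain ⟨t, h⟩ := hedge u v ⟨huv, i, hu, hv⟩
        exact ⟨t, Finset.mem_univ t, h.1, h.2⟩
    obtain ⟨t, -, hKt⟩ := clique_in_bag T hT Q hbag (K i)
      (Finset.univ : Finset τ).card Finset.univ le_rfl huniv hconnU hWpair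
    have h1 : μ0 x ≤ marg μ0 (Q t) x := le_marg hμ0pos (fun j _ => rfl)
    rw [hμ0marg t (Finset.mem_univ t) x] at h1
    have h2 : marg (lam t) (Q t) x ≠ 0 := by
      intro h0; rw [h0] at h1; exact hx (le_antisymm h1 (hμ0pos x))
    rw [marg] at h2
    obtain ⟨v, hvmem, hvne⟩ := Finset.exists_ne_zero_of_sum_ne_zero h2
    simp only [Finset.mem_filter, Finset.mem_univ, true_and] at hvmem
    have hvF : v ∈ Ffeas K Sc Q t := by
      by_contra hc; exact hvne (hsupp0 t v hc)
    have hres : restr x (K i) = restr v (K i) := by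
      funext j
      exact (hvmem j.1 (hKt j.2)).symm
    rw [hres]
    exact hvF.2 i hKt
  -- enumerate the support
  set D : Finset (Fin n → Bool) := Finset.univ.filter (fun x => μ0 x ≠ 0) with hD
  have hDmem : ∀ x, x ∈ D ↔ μ0 x ≠ 0 := by
    intro x; rw [hD]; simp
  have hDne : D.Nonempty := by
    rcases Finset.eq_empty_or_nonempty D with h | h
    · exfalso
      have hz : ∑ x, μ0 x = 0 := Finset.sum_eq_zero (fun x _ => by
        by_contra hc
        have : x ∈ D := (hDmem x).mpr hc
        rw [h] at this
        exact absurd this (Finset.notMem_empty x))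
      rw [hμ0sum] at hz; norm_num at hz
    · exact h
  have hsum_equiv : ∀ (f : (Fin n → Bool) → ℝ),
      (∑ ℓ : Fin D.card, f ((D.equivFin.symm ℓ) : Fin n → Bool)) = ∑ x ∈ D, f x := by
    intro f
    rw [Equiv.sum_comp D.equivFin.symm (fun a : D => f (a : Fin n → Bool))]
    exact Finset.sum_coe_sort D f
  refine ⟨D.card, fun ℓ => μ0 ((D.equivFin.symm ℓ) : Fin n → Bool),
    fun ℓ => ((D.equivFin.symm ℓ) : Fin n → Bool), ?_, ?_, ?_, ?_, ?_⟩
  · exact Finset.card_pos.mpr hDne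
  · intro ℓ; exact hμ0pos _
  · rw [hsum_equiv μ0, ← hμ0sum]
    exact Finset.sum_filter_ne_zero Finset.univ
  · intro ℓ
    exact hfeasx _ ((hDmem _).mp (D.equivFin.symm ℓ).2)
  · intro t YN hYN
    obtain ⟨hdisj, hsub, hrest⟩ := hYN
    rw [hX t YN ⟨hdisj, hsub, hrest⟩]
    rw [sum_prod_eq_marg (lam t) hdisj]
    rw [← marg_eq_of_marg_eq hsub (fun w => hμ0marg t (Finset.mem_univ t) w)]
    rw [← sum_prod_eq_marg μ0 hdisj]
    rw [show (∑ v : Fin n → Bool,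
        μ0 v * (∏ j ∈ YN.1, bval (v j)) * (∏ j ∈ YN.2, (1 - bval (v j))))
        = ∑ v ∈ D, μ0 v * (∏ j ∈ YN.1, bval (v j)) * (∏ j ∈ YN.2, (1 - bval (v j))) from ?_]
    · exact (hsum_equiv _).symm
    · symm
      apply Finset.sum_filter_of_ne
      intro x _ hne
      intro h0
      rw [h0] at hne
      simp at hne

end LPGBmain

/-- Theorem: LP-GB is an exact formulation. Any feasible solution of LP-GB
decomposes as a convex combination of GB-feasible 0/1 vectors; consequently, when the GB
instance is feasible, the optimum of GB equals the optimum of LP-GB, and the latter is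
attained. -/
theorem lpgb_exact
    {n m : ℕ} {τ : Type} [Fintype τ] (K : Fin m → Finset (Fin n))
    (Sc : ∀ i : Fin m, Set ({j // j ∈ K i} → Bool))
    (T : SimpleGraph τ) (Q : τ → Finset (Fin n))
    (hTD : IsTreeDecomp (interGraph K) T Q)
    (X : Finset (Fin n) × Finset (Fin n) → ℝ) (lam : τ → (Fin n → Bool) → ℝ)
    (hfeas : LPGBFeas K Sc T Q X lam) :
    (∃ (k : ℕ) (μ : Fin k → ℝ) (x : Fin k → Fin n → Bool),
      1 ≤ k ∧
      (∀ ℓ, 0 ≤ μ ℓ) ∧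
      (∑ ℓ, μ ℓ) = 1 ∧
      (∀ ℓ, GBFeas K Sc (x ℓ)) ∧
      (∀ t, ∀ YN ∈ Omega T Q t,
        X YN = ∑ ℓ, μ ℓ * (∏ j ∈ YN.1, bval (x ℓ j)) * (∏ j ∈ YN.2, (1 - bval (x ℓ j))))) ∧
    ((∃ x0 : Fin n → Bool, GBFeas K Sc x0) → ∀ c : Fin n → ℝ, ∃ r : ℝ,
      IsLeast {val : ℝ | ∃ x : Fin n → Bool, GBFeas K Sc x ∧ val = ∑ j, c j * bval (x j)} r ∧
      IsLeast {val : ℝ | ∃ (X' : Finset (Fin n) × Finset (Fin n) → ℝ)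
          (lam' : τ → (Fin n → Bool) → ℝ),
        LPGBFeas K Sc T Q X' lam' ∧ val = ∑ j, c j * X' ({j}, ∅)} r) := by
  classical
  constructor
  · exact LPGBmain.decomp K Sc T Q hTD X lam hfeas
  · rintro ⟨x₀, hx₀⟩ c
    set FS : Finset (Fin n → Bool) := Finset.univ.filter (fun x => GBFeas K Sc x) with hFS
    have hFSne : FS.Nonempty := ⟨x₀, by simp [hFS, hx₀]⟩
    obtain ⟨xstar, hxstarFS, hmin⟩ :=
      Finset.exists_min_image FS (fun x => ∑ j, c j * bval (x j)) hFSne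
    have hxstar : GBFeas K Sc xstar := (Finset.mem_filter.mp hxstarFS).2
    set r : ℝ := ∑ j, c j * bval (xstar j) with hr
    have hminFS : ∀ x : Fin n → Bool, GBFeas K Sc x → r ≤ ∑ j, c j * bval (x j) := by
      intro x hx
      exact hmin x (Finset.mem_filter.mpr ⟨Finset.mem_univ x, hx⟩)
    refine ⟨r, ⟨⟨xstar, hxstar, rfl⟩, ?_⟩, ⟨?_, ?_⟩⟩
    · rintro val ⟨x, hx, rfl⟩
      exact hminFS x hx
    · -- the integral solution built from xstar is LP-feasible with value r
      refine ⟨fun YN => (∏ j ∈ YN.1, bval (xstar j)) * (∏ j ∈ YN.2, (1 - bval (xstar j))),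
        fun t v => if v = LPGBaux.proj (Q t) xstar then 1 else 0, ⟨?_, ?_, ?_, ?_⟩, ?_⟩
      · intro t v hv
        beta_reduce
        rw [if_neg]
        intro hc
        apply hv
        subst hc
        constructor
        · intro j hj; exact LPGBaux.proj_not_mem hj
        · intro i hKi
          have hre : restr (LPGBaux.proj (Q t) xstar) (K i) = restr xstar (K i) := by
            funext j
            exact LPGBaux.proj_mem (hKi j.2)
          rw [hre]
          exact hxstar i
      · intro t v
        beta_reduce
        split <;> norm_num
      · intro t
        simp [Finset.sum_ite_eq']
      · intro t YN hYN
        beta_reduce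
        have hsub : YN.1 ∪ YN.2 ⊆ Q t := hYN.2.1
        have h1 : ∀ v : Fin n → Bool,
            (if v = LPGBaux.proj (Q t) xstar then (1:ℝ) else 0)
              * (∏ j ∈ YN.1, bval (v j)) * (∏ j ∈ YN.2, (1 - bval (v j)))
            = if v = LPGBaux.proj (Q t) xstar then
                (∏ j ∈ YN.1, bval (v j)) * (∏ j ∈ YN.2, (1 - bval (v j))) else 0 := by
          intro v
          split <;> ring
        rw [Finset.sum_congr rfl (fun v _ => h1 v), Finset.sum_ite_eq' Finset.univ]
        rw [if_pos (Finset.mem_univ _)]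
        have e1 : ∏ j ∈ YN.1, bval (LPGBaux.proj (Q t) xstar j) = ∏ j ∈ YN.1, bval (xstar j) :=
          Finset.prod_congr rfl fun j hj => by
            rw [LPGBaux.proj_mem (hsub (Finset.mem_union_left _ hj))]
        have e2 : ∏ j ∈ YN.2, (1 - bval (LPGBaux.proj (Q t) xstar j))
            = ∏ j ∈ YN.2, (1 - bval (xstar j)) :=
          Finset.prod_congr rfl fun j hj => by
            rw [LPGBaux.proj_mem (hsub (Finset.mem_union_right _ hj))]
        rw [e1, e2]
      · rw [hr]
        apply Finset.sum_congr rfl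
        intro j _
        simp
    · -- r is a lower bound for LP values
      rintro val ⟨X', lam', hfeas', rfl⟩
      obtain ⟨k, μ, x, hk, hμpos, hμsum, hxfeas, hmatch⟩ :=
        LPGBmain.decomp K Sc T Q hTD X' lam' hfeas'
      have hXj : ∀ j : Fin n, X' ({j}, ∅) = ∑ ℓ, μ ℓ * bval (x ℓ j) := by
        intro j
        obtain ⟨⟨t, htj⟩⟩ := (hTD.2.1 j).nonempty
        have hOm : (({j}, ∅) : Finset (Fin n) × Finset (Fin n)) ∈ Omega T Q t := by
          refine ⟨Finset.disjoint_empty_right _, ?_, Or.inl ⟨by simp, rfl⟩⟩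
          rw [Finset.union_empty, Finset.singleton_subset_iff]
          exact htj
        have := hmatch t ({j}, ∅) hOm
        simpa using this
      have hval : ∑ j, c j * X' ({j}, ∅) = ∑ ℓ, μ ℓ * ∑ j, c j * bval (x ℓ j) := by
        calc ∑ j, c j * X' ({j}, ∅) = ∑ j, ∑ ℓ, c j * (μ ℓ * bval (x ℓ j)) := by
              apply Finset.sum_congr rfl
              intro j _
              rw [hXj j, Finset.mul_sum]
          _ = ∑ ℓ, ∑ j, c j * (μ ℓ * bval (x ℓ j)) := Finset.sum_comm
          _ = ∑ ℓ, μ ℓ * ∑ j, c j * bval (x ℓ j) := by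
              apply Finset.sum_congr rfl
              intro ℓ _
              rw [Finset.mul_sum]
              apply Finset.sum_congr rfl
              intro j _
              ring
      rw [hval]
      have : ∑ ℓ, μ ℓ * r ≤ ∑ ℓ, μ ℓ * ∑ j, c j * bval (x ℓ j) := by
        apply Finset.sum_le_sum
        intro ℓ _
        exact mul_le_mul_of_nonneg_left (hminFS (x ℓ) (hxfeas ℓ)) (hμpos ℓ)
      calc r = ∑ ℓ, μ ℓ * r := by rw [← Finset.sum_mul, hμsum, one_mul]
        _ ≤ _ := this
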